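/- Let μ be a nontrivial weakly stable probability measure on ℝ, let p > 0, and suppose there exists a probability measure λ ≠ δ_0 on ℝ such that for all a, b > 0, (T_a(μ∘λ)) ∗ (T_b(μ∘λ)) = T_{(a^p+b^p)^{1/p}}(μ∘λ). Then p ≤ 2. -/

import Mathlib

open MeasureTheory Filter Topology ENNReal BoundedContinuousFunction

noncomputable section

/-- `T_c μ`: pushforward of `μ` under `x ↦ c * x`. -/
def rescale (c : ℝ) (μ : Measure ℝ) : Measure ℝ := μ.map (fun x => c * x)

/-- Scale mixture `μ ∘ ν`: pushforward of `μ × ν` under `(x, s) ↦ x * s`. -/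
def mix (μ ν : Measure ℝ) : Measure ℝ := (μ.prod ν).map (fun p => p.1 * p.2)

/-- Convolution of two measures on `ℝ`. -/
def mconv (μ ν : Measure ℝ) : Measure ℝ := (μ.prod ν).map (fun p => p.1 + p.2)

/-- `n`-fold convolution power, with the convention that the 0th power is `δ_0`. -/
def convPow (μ : Measure ℝ) : ℕ → Measure ℝ
  | 0 => Measure.dirac 0
  | n + 1 => mconv (convPow μ n) μ

/-- A probability measure `μ` on `ℝ` is weakly stable if for all `a b : ℝ` there is a
probability measure `lam` with `(T_a μ) ∗ (T_b μ) = μ ∘ lam`. -/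
def WeaklyStable (μ : Measure ℝ) : Prop :=
  ∀ a b : ℝ, ∃ lam : Measure ℝ, IsProbabilityMeasure lam ∧
    mconv (rescale a μ) (rescale b μ) = mix μ lam

/-- `μ` is nontrivial: it has no atoms. -/
def NontrivialMeasure (μ : Measure ℝ) : Prop := ∀ x : ℝ, μ {x} = 0

/-- `μ` is symmetric: `T_{-1} μ = μ`. -/
def SymmetricMeasure (μ : Measure ℝ) : Prop := rescale (-1) μ = μ

/-- `lam` is `μ`-weakly infinitely divisible: for every `n ≥ 1` there is a probability
measure `ν` concentrated on `[0, ∞)` with `(μ ∘ ν)^{∗ n} = μ ∘ lam`. -/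
def MuWeaklyInfDiv (μ lam : Measure ℝ) : Prop :=
  ∀ n : ℕ, 1 ≤ n → ∃ ν : Measure ℝ, IsProbabilityMeasure ν ∧ ν (Set.Iio 0) = 0 ∧
    convPow (mix μ ν) n = mix μ lam

/-- Characteristic function of a measure on `ℝ`. -/
def charFun' (μ : Measure ℝ) (t : ℝ) : ℂ := ∫ x, Complex.exp (t * x * Complex.I) ∂μ

/-- Weak convergence of a sequence of measures on `ℝ`. -/
def WeakTendsto (μs : ℕ → Measure ℝ) (μ : Measure ℝ) : Prop :=
  ∀ f : ℝ →ᵇ ℝ, Tendsto (fun n => ∫ x, f x ∂(μs n)) atTop (𝓝 (∫ x, f x ∂μ))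

/-- A convolution semigroup family for `(μ, lam)`. -/
def ConvSemigroupFamily (μ lam : Measure ℝ) (L : ℝ → Measure ℝ) : Prop :=
  (∀ r : ℝ, 0 ≤ r → IsProbabilityMeasure (L r)) ∧
  L 0 = Measure.dirac 0 ∧ L 1 = lam ∧
  (∀ r s : ℝ, 0 ≤ r → 0 ≤ s → mconv (mix μ (L r)) (mix μ (L s)) = mix μ (L (r + s))) ∧
  (∀ f : ℝ →ᵇ ℝ, Tendsto (fun r => ∫ x, f x ∂(L r)) (𝓝[>] (0 : ℝ)) (𝓝 (f 0)))

/-- `C_#`: bounded continuous functions vanishing on a neighborhood of `0`. -/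
def CSharp (f : ℝ →ᵇ ℝ) : Prop := ∃ ε > (0 : ℝ), ∀ x : ℝ, |x| < ε → f x = 0

/-- `κ(μ) = sup {p ∈ [0,2] : ∫ |x|^p μ(dx) < ∞}` (with `sup ∅ = 0` in `ℝ`). -/
def kappa (μ : Measure ℝ) : ℝ :=
  sSup {p : ℝ | p ∈ Set.Icc (0 : ℝ) 2 ∧ ∫⁻ x, ENNReal.ofReal (|x| ^ p) ∂μ < ∞}

/-! ### Auxiliary lemmas -/

section Aux

instance rescale.prob (c : ℝ) (μ : Measure ℝ) [IsProbabilityMeasure μ] :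
    IsProbabilityMeasure (rescale c μ) :=
  Measure.isProbabilityMeasure_map (measurable_const_mul c).aemeasurable

instance mix.prob (μ ν : Measure ℝ) [IsProbabilityMeasure μ] [IsProbabilityMeasure ν] :
    IsProbabilityMeasure (mix μ ν) :=
  Measure.isProbabilityMeasure_map (measurable_fst.mul measurable_snd).aemeasurable

instance mconv.prob (μ ν : Measure ℝ) [IsProbabilityMeasure μ] [IsProbabilityMeasure ν] :
    IsProbabilityMeasure (mconv μ ν) :=
  Measure.isProbabilityMeasure_map (measurable_fst.add measurable_snd).aemeasurable

lemma cexp_cont (t : ℝ) : Continuous (fun x : ℝ => Complex.exp (t * x * Complex.I)) := by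
  fun_prop

lemma cexp_norm (t x : ℝ) : ‖Complex.exp (t * x * Complex.I)‖ = 1 := by
  have : ((t : ℂ) * x * Complex.I) = ((t*x : ℝ) : ℂ) * Complex.I := by push_cast; ring
  rw [this]
  exact Complex.norm_exp_ofReal_mul_I _

lemma cexp_integrable (μ : Measure ℝ) [IsProbabilityMeasure μ] (t : ℝ) :
    Integrable (fun x : ℝ => Complex.exp (t * x * Complex.I)) μ := by
  refine Integrable.mono' (integrable_const 1) (cexp_cont t).aestronglyMeasurable ?_
  exact ae_of_all _ fun x => le_of_eq (cexp_norm t x)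

lemma charFun'_rescale (μ : Measure ℝ) (c t : ℝ) :
    charFun' (rescale c μ) t = charFun' μ (c * t) := by
  rw [charFun', rescale, integral_map (measurable_const_mul c).aemeasurable
    (cexp_cont t).aestronglyMeasurable]
  simp only [charFun']
  congr 1; ext x; congr 2; push_cast; ring

lemma charFun'_mconv (μ ν : Measure ℝ) [IsProbabilityMeasure μ] [IsProbabilityMeasure ν] (t : ℝ) :
    charFun' (mconv μ ν) t = charFun' μ t * charFun' ν t := by
  rw [charFun', mconv, integral_map (by fun_prop : Measurable fun p : ℝ × ℝ => p.1 + p.2).aemeasurable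
    (cexp_cont t).aestronglyMeasurable]
  rw [charFun', charFun', ← integral_prod_mul]
  congr 1; ext p
  rw [← Complex.exp_add]
  congr 1; push_cast; ring

lemma charFun'_neg (μ : Measure ℝ) (t : ℝ) :
    charFun' μ (-t) = (starRingEnd ℂ) (charFun' μ t) := by
  rw [charFun', charFun', ← integral_conj]
  congr 1; ext x
  rw [← Complex.exp_conj]
  congr 1
  simp [Complex.ext_iff]

lemma norm_charFun'_le (μ : Measure ℝ) [IsProbabilityMeasure μ] (t : ℝ) :
    ‖charFun' μ t‖ ≤ 1 := by
  calc ‖charFun' μ t‖ ≤ ∫ x, ‖Complex.exp (t * x * Complex.I)‖ ∂μ :=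
        norm_integral_le_integral_norm _
    _ = 1 := by simp only [cexp_norm]; simp

lemma cos_cont (t : ℝ) : Continuous (fun x : ℝ => Real.cos (t * x)) := by fun_prop

lemma cos_integrable (μ : Measure ℝ) [IsProbabilityMeasure μ] (t : ℝ) :
    Integrable (fun x : ℝ => Real.cos (t * x)) μ := by
  refine Integrable.mono' (integrable_const 1) (cos_cont t).aestronglyMeasurable ?_
  exact ae_of_all _ fun x => by simpa using Real.abs_cos_le_one (t*x)

lemma re_charFun' (μ : Measure ℝ) [IsProbabilityMeasure μ] (t : ℝ) :
    (charFun' μ t).re = ∫ x, Real.cos (t * x) ∂μ := by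
  have h := integral_re (cexp_integrable μ t)
  simp only [RCLike.re_to_complex] at h
  rw [charFun', ← h]
  congr 1; ext x
  have h2 : ((t:ℂ) * x * Complex.I) = ((t*x : ℝ) : ℂ) * Complex.I := by push_cast; ring
  rw [h2, Complex.exp_ofReal_mul_I_re]

lemma eq_dirac_of_singleton (lam : Measure ℝ) [IsProbabilityMeasure lam] (h : lam {0} = 1) :
    lam = Measure.dirac 0 := by
  ext A hA
  rw [Measure.dirac_apply' _ hA]
  have hc : lam {(0:ℝ)}ᶜ = 0 :=
    (prob_compl_eq_zero_iff (measurableSet_singleton (0:ℝ))).mpr h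
  by_cases h0 : (0:ℝ) ∈ A
  · have h1 : lam A ≤ 1 := prob_le_one
    have h2 : (1:ℝ≥0∞) ≤ lam A := by
      rw [← h]; exact measure_mono (Set.singleton_subset_iff.mpr h0)
    simp [Set.indicator_of_mem h0, le_antisymm h1 h2]
  · have : A ⊆ {(0:ℝ)}ᶜ := fun x hx => by rintro rfl; exact h0 hx
    simp [Set.indicator_of_notMem h0, le_antisymm ((measure_mono this).trans hc.le) zero_le]

lemma mix_singleton (μ lam : Measure ℝ) [IsProbabilityMeasure μ] [IsProbabilityMeasure lam]
    (hnt : ∀ x : ℝ, μ {x} = 0) (y : ℝ) :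
    mix μ lam {y} = if y = 0 then lam {0} else 0 := by
  rw [mix, Measure.map_apply (by fun_prop : Measurable fun p : ℝ × ℝ => p.1 * p.2) (measurableSet_singleton y)]
  have hS : MeasurableSet ((fun p : ℝ × ℝ => p.1 * p.2) ⁻¹' {y}) :=
    (measurable_fst.mul measurable_snd) (measurableSet_singleton y)
  rw [Measure.prod_apply_symm hS]
  have key : ∀ s : ℝ, μ ((fun x => (x, s)) ⁻¹' ((fun p : ℝ × ℝ => p.1 * p.2) ⁻¹' {y}))
      = if s = 0 ∧ y = 0 then 1 else 0 := by
    intro s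
    by_cases hs : s = 0
    · subst hs
      by_cases hy : y = 0
      · subst hy
        simp only [Set.preimage, Set.mem_singleton_iff, mul_zero]
        simp [Set.setOf_true, if_pos]
      · simp only [Set.preimage, Set.mem_singleton_iff, mul_zero]
        rw [if_neg (by tauto)]
        convert measure_empty
        · ext x; simpa using fun h => hy h.symm
        · infer_instance
    · rw [if_neg (by tauto)]
      have : ((fun x => (x, s)) ⁻¹' ((fun p : ℝ × ℝ => p.1 * p.2) ⁻¹' {y})) = {y / s} := by
        ext x
        simp only [Set.mem_preimage, Set.mem_singleton_iff]
        constructor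
        · intro h; field_simp [← h]; exact h
        · intro h; subst h; field_simp
      rw [this]; exact hnt _
  simp only [key]
  by_cases hy : y = 0
  · subst hy
    simp only [and_true, if_pos]
    have : ∀ y : ℝ, (if y = 0 then (1:ℝ≥0∞) else 0) = Set.indicator {(0:ℝ)} (fun _ => 1) y := by
      intro y; simp [Set.indicator_apply]
    simp only [this]
    rw [lintegral_indicator (measurableSet_singleton 0)]
    simp
  · simp [hy]

lemma rescale_neg_one_singleton (ν : Measure ℝ) (y : ℝ) :
    rescale (-1) ν {y} = ν {-y} := by
  rw [rescale, Measure.map_apply (measurable_const_mul (-1)) (measurableSet_singleton y)]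
  congr 1
  ext x
  simp only [Set.mem_preimage, Set.mem_singleton_iff]
  constructor
  · intro h; linarith
  · intro h; subst h; ring

lemma mconv_symm_zero (ν : Measure ℝ) [IsProbabilityMeasure ν] (w : ℝ≥0∞)
    (hν : ∀ y : ℝ, ν {y} = if y = 0 then w else 0) :
    mconv ν (rescale (-1) ν) {0} = w * w := by
  rw [mconv, Measure.map_apply (by fun_prop : Measurable fun p : ℝ × ℝ => p.1 + p.2) (measurableSet_singleton 0)]
  have hS : MeasurableSet ((fun p : ℝ × ℝ => p.1 + p.2) ⁻¹' {(0:ℝ)}) :=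
    (measurable_fst.add measurable_snd) (measurableSet_singleton 0)
  rw [Measure.prod_apply hS]
  have key : ∀ x : ℝ, rescale (-1) ν (Prod.mk x ⁻¹' ((fun p : ℝ × ℝ => p.1 + p.2) ⁻¹' {(0:ℝ)}))
      = if x = 0 then w else 0 := by
    intro x
    have h1 : (Prod.mk x ⁻¹' ((fun p : ℝ × ℝ => p.1 + p.2) ⁻¹' {(0:ℝ)})) = {-x} := by
      ext z
      simp only [Set.mem_preimage, Set.mem_singleton_iff]
      constructor
      · intro h; linarith
      · intro h; subst h; ring
    rw [h1, rescale_neg_one_singleton, neg_neg, hν]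
  simp only [key]
  have : ∀ x : ℝ, (if x = 0 then w else 0) = Set.indicator {(0:ℝ)} (fun _ => w) x := by
    intro x; simp [Set.indicator_apply]
  simp only [this]
  rw [lintegral_indicator (measurableSet_singleton 0)]
  simp only [setLIntegral_const]
  rw [hν 0, if_pos rfl, mul_comm]

open Real in
lemma one_sub_cos_ge {θ : ℝ} (h : |θ| ≤ π) : 2/π^2 * θ^2 ≤ 1 - Real.cos θ := by
  wlog hθ : 0 ≤ θ with H
  · have := H (θ := -θ) (by rwa [abs_neg]) (by linarith [not_le.mp hθ])
    simpa [Real.cos_neg] using this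
  have hθπ : θ ≤ π := by rwa [abs_of_nonneg hθ] at h
  have hs : 2/π * (θ/2) ≤ Real.sin (θ/2) :=
    Real.mul_le_sin (by linarith) (by linarith)
  have hcos : Real.cos θ = 1 - 2 * Real.sin (θ/2)^2 := by
    have h2 : Real.cos (2 * (θ/2)) = 2 * Real.cos (θ/2)^2 - 1 := Real.cos_two_mul _
    have h3 : Real.sin (θ/2)^2 + Real.cos (θ/2)^2 = 1 := Real.sin_sq_add_cos_sq _
    have : (2 : ℝ) * (θ/2) = θ := by ring
    rw [this] at h2
    linarith
  have hπ : 0 < π := Real.pi_pos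
  have hlhs : 0 ≤ 2/π * (θ/2) := by positivity
  have hs' : θ/π ≤ Real.sin (θ/2) := by
    have : 2/π * (θ/2) = θ/π := by field_simp
    linarith [this ▸ hs]
  have h4 : θ^2/π^2 ≤ Real.sin (θ/2)^2 := by
    have := mul_self_le_mul_self (by positivity : (0:ℝ) ≤ θ/π) hs'
    calc θ^2/π^2 = (θ/π) * (θ/π) := by ring
      _ ≤ Real.sin (θ/2) * Real.sin (θ/2) := this
      _ = Real.sin (θ/2)^2 := by ring
  have h5 : 2/π^2*θ^2 = 2*(θ^2/π^2) := by ring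
  rw [hcos, h5]
  linarith

end Aux

theorem stmt4 (μ : Measure ℝ) (hμ : IsProbabilityMeasure μ) (hnt : NontrivialMeasure μ)
    (hws : WeaklyStable μ) (p : ℝ) (hp : 0 < p)
    (lam : Measure ℝ) (hlam : IsProbabilityMeasure lam) (hne : lam ≠ Measure.dirac 0)
    (hstab : ∀ a b : ℝ, 0 < a → 0 < b →
      mconv (rescale a (mix μ lam)) (rescale b (mix μ lam))
        = rescale ((a ^ p + b ^ p) ^ (1 / p)) (mix μ lam)) :
    p ≤ 2 := by
  by_contra hle
  push_neg at hle
  set ν : Measure ℝ := mix μ lam with hν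
  haveI : IsProbabilityMeasure ν := mix.prob μ lam
  set ρ : Measure ℝ := mconv ν (rescale (-1) ν) with hρ
  haveI : IsProbabilityMeasure (rescale (-1) ν) := rescale.prob _ _
  haveI : IsProbabilityMeasure ρ := mconv.prob _ _
  set φ : ℝ → ℂ := fun t => charFun' ν t with hφ
  set g : ℝ → ℝ := fun t => Complex.normSq (φ t) with hg
  -- lam {0} < 1
  have hlam0 : lam {(0:ℝ)} < 1 := by
    rcases lt_or_ge (lam {(0:ℝ)}) 1 with h | h
    · exact h
    · exact absurd (eq_dirac_of_singleton lam (le_antisymm prob_le_one h)) hne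
  have hν1 : ∀ y : ℝ, ν {y} = if y = 0 then lam {0} else 0 := mix_singleton μ lam hnt
  have hρ0 : ρ {(0:ℝ)} = lam {0} * lam {0} := mconv_symm_zero ν _ hν1
  have hρ0lt : ρ {(0:ℝ)} < 1 := by
    rw [hρ0]
    calc lam {(0:ℝ)} * lam {(0:ℝ)} ≤ 1 * lam {(0:ℝ)} :=
          mul_le_mul_left prob_le_one _
      _ = lam {(0:ℝ)} := one_mul _
      _ < 1 := hlam0
  have hfull : ρ {(0:ℝ)}ᶜ ≠ 0 := by
    intro h
    exact absurd ((prob_compl_eq_zero_iff (measurableSet_singleton (0:ℝ))).mp h)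
      hρ0lt.ne
  -- charFun' of ρ is real: equals g
  have hgρ : ∀ u : ℝ, charFun' ρ u = (g u : ℂ) := by
    intro u
    rw [hρ, charFun'_mconv, charFun'_rescale]
    have : (-1 : ℝ) * u = -u := by ring
    rw [this, charFun'_neg, Complex.mul_conj]
  -- H
  set H : ℝ → ℝ := fun u => ∫ x, (1 - Real.cos (u * x)) ∂ρ with hH
  have hHg : ∀ u : ℝ, H u = 1 - g u := by
    intro u
    have h1 : H u = ∫ x, (1:ℝ) ∂ρ - ∫ x, Real.cos (u * x) ∂ρ :=
      integral_sub (integrable_const 1) (cos_integrable ρ u)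
    rw [h1, integral_const, probReal_univ, ← re_charFun' ρ u, hgρ u]
    simp
  have hHnn : ∀ u : ℝ, 0 ≤ H u := by
    intro u
    exact integral_nonneg fun x => by simp [Real.cos_le_one (u*x)]
  have hgnn : ∀ u : ℝ, 0 ≤ g u := fun u => Complex.normSq_nonneg _
  -- the constant c
  set c : ℝ := (2:ℝ) ^ (1/p : ℝ) with hc
  have hc1 : 1 < c := by
    rw [hc]
    rw [Real.one_lt_rpow_iff (by norm_num)]
    left
    exact ⟨one_lt_two, by positivity⟩
  have hc0 : 0 < c := lt_trans one_pos hc1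
  have hcsq : c^2 < 2 := by
    have h1 : c^2 = (2:ℝ) ^ ((1/p) * 2 : ℝ) := by
      rw [hc, ← Real.rpow_natCast ((2:ℝ)^(1/p:ℝ)) 2, ← Real.rpow_mul (by norm_num)]
      norm_num
    rw [h1]
    calc (2:ℝ) ^ ((1/p) * 2 : ℝ) < (2:ℝ) ^ (1:ℝ) := by
          rw [Real.rpow_lt_rpow_left_iff one_lt_two]
          have h2 : (1/p) * 2 = 2/p := by ring
          rw [h2, div_lt_one hp]
          exact hle
      _ = 2 := Real.rpow_one 2
  -- functional equation
  have hfe : ∀ u : ℝ, φ u * φ u = φ (c * u) := by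
    intro u
    have h1 := hstab 1 1 one_pos one_pos
    have h2 : ((1:ℝ) ^ p + (1:ℝ) ^ p) ^ (1/p : ℝ) = c := by
      rw [Real.one_rpow, hc]; norm_num
    rw [h2] at h1
    have h3 := congrArg (fun m => charFun' m u) h1
    rw [charFun'_mconv, charFun'_rescale, charFun'_rescale, one_mul] at h3
    exact h3
  have hgfe : ∀ u : ℝ, g (c * u) = g u ^ 2 := by
    intro u
    show Complex.normSq (φ (c * u)) = Complex.normSq (φ u) ^ 2
    rw [← hfe u, Complex.normSq_mul, sq]
  have hiter : ∀ n : ℕ, ∀ u : ℝ, g (c^n * u) = g u ^ (2^n) := by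
    intro n
    induction n with
    | zero => intro u; simp
    | succ n ih =>
        intro u
        have h1 : c^(n+1) * u = c^n * (c * u) := by ring
        rw [h1, ih (c * u), hgfe u, ← pow_mul]
        congr 1
        ring
  -- existence of t₀ with H t₀ > 0
  have hex : ∃ t₀ : ℝ, 0 < H t₀ := by
    by_contra hno
    push_neg at hno
    have hzero : ∀ u : ℝ, H u = 0 := fun u => le_antisymm (hno u) (hHnn u)
    have hae : ∀ u : ℝ, ∀ᵐ x ∂ρ, 1 - Real.cos (u * x) = 0 := by
      intro u
      have hnn : 0 ≤ (fun x : ℝ => 1 - Real.cos (u*x)) := by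
        intro x
        simp [sub_nonneg, Real.cos_le_one (u*x)]
      have := (integral_eq_zero_iff_of_nonneg hnn
        ((integrable_const 1).sub (cos_integrable ρ u))).mp (hzero u)
      filter_upwards [this] with x hx
      exact hx
    have h1 := hae 1
    have h2 := hae (Real.sqrt 2)
    have hcomb : ∀ᵐ x ∂ρ, x = 0 := by
      filter_upwards [h1, h2] with x hx1 hx2
      have hc1 : Real.cos x = 1 := by
        have := hx1; rw [one_mul] at this; linarith
      have hc2 : Real.cos (Real.sqrt 2 * x) = 1 := by linarith
      obtain ⟨n, hn⟩ := (Real.cos_eq_one_iff x).mp hc1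
      obtain ⟨m, hm⟩ := (Real.cos_eq_one_iff _).mp hc2
      by_cases hn0 : n = 0
      · rw [hn0] at hn; simpa using hn.symm
      · exfalso
        have hπ : (0:ℝ) < 2 * Real.pi := by positivity
        have h2π : (2 * Real.pi) ≠ 0 := hπ.ne'
        have e1 : Real.sqrt 2 * (n:ℝ) * (2*Real.pi) = (m:ℝ) * (2*Real.pi) := by
          rw [mul_assoc, hn, hm]
        have key : Real.sqrt 2 * (n:ℝ) = (m:ℝ) := mul_right_cancel₀ h2π e1
        apply irrational_sqrt_two
        have hnne : (n:ℝ) ≠ 0 := Int.cast_ne_zero.mpr hn0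
        refine ⟨(m : ℚ) / (n : ℚ), ?_⟩
        push_cast
        rw [div_eq_iff hnne]
        exact key.symm
    have hzero : ρ {(0:ℝ)}ᶜ = 0 := by
      have h := hcomb
      rw [ae_iff] at h
      have hset : {x : ℝ | ¬ x = 0} = {(0:ℝ)}ᶜ := by ext x; simp
      rwa [hset] at h
    exact hfull hzero
  obtain ⟨t₀, ht₀⟩ := hex
  have ht₀ne : t₀ ≠ 0 := by
    intro h
    rw [h] at ht₀
    have : H 0 = 0 := by
      rw [hH]; simp
    linarith
  -- the sequence u n
  set u : ℕ → ℝ := fun n => t₀ / c^n with hu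
  have hcn0 : ∀ n : ℕ, (c:ℝ)^n ≠ 0 := fun n => pow_ne_zero n hc0.ne'
  have hun : ∀ n : ℕ, c^n * u n = t₀ := by
    intro n; rw [hu]; field_simp
  have hgun : ∀ n : ℕ, g (u n) ^ (2^n) = g t₀ := by
    intro n
    rw [← hiter n (u n), hun n]
  have hu0 : Tendsto u atTop (𝓝 0) := by
    have h1 : u = fun n => t₀ * (c⁻¹)^n := by
      ext n; rw [hu]; field_simp
      rw [one_div, ← mul_pow, mul_inv_cancel₀ hc0.ne', one_pow]
    rw [h1]
    have := tendsto_pow_atTop_nhds_zero_of_lt_one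
      (le_of_lt (inv_pos.mpr hc0)) (inv_lt_one_of_one_lt₀ hc1)
    simpa using this.const_mul t₀
  have hHlim : Tendsto (fun n => H (u n)) atTop (𝓝 0) := by
    have h0 : (0:ℝ) = ∫ x, (0:ℝ) ∂ρ := by simp
    rw [h0]
    apply tendsto_integral_of_dominated_convergence (fun _ => (2:ℝ))
    · intro n
      exact (Continuous.aestronglyMeasurable (by fun_prop))
    · exact integrable_const 2
    · intro n
      refine ae_of_all _ fun x => ?_
      rw [Real.norm_eq_abs, abs_le]
      constructor
      · linarith [Real.cos_le_one (u n * x)]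
      · linarith [Real.neg_one_le_cos (u n * x)]
    · refine ae_of_all _ fun x => ?_
      have h1 : Tendsto (fun n => u n * x) atTop (𝓝 0) := by
        simpa using hu0.mul_const x
      have h2 : Tendsto (fun n => Real.cos (u n * x)) atTop (𝓝 1) := by
        have := (Real.continuous_cos.tendsto 0).comp h1
        simpa using (by exact this : Tendsto (fun n => Real.cos (u n * x)) atTop (𝓝 (Real.cos 0)))
      have := h2.const_sub 1
      simpa using this
  have hgt₀pos : 0 < g t₀ := by
    rcases (hgnn t₀).lt_or_eq with h | h
    · exact h
    · exfalso
      have hgu0 : ∀ n : ℕ, g (u n) = 0 := by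
        intro n
        have := hgun n
        rw [← h] at this
        exact pow_eq_zero_iff (by positivity) |>.mp this
      have hH1 : ∀ n : ℕ, H (u n) = 1 := by
        intro n; rw [hHg, hgu0 n]; ring
      have : Tendsto (fun _ : ℕ => (1:ℝ)) atTop (𝓝 0) := by
        convert hHlim using 1
        ext n; rw [hH1 n]
      exact absurd (tendsto_nhds_unique this tendsto_const_nhds) zero_ne_one
  set K : ℝ := -Real.log (g t₀) with hK
  have hHb : ∀ n : ℕ, H (u n) ≤ K / 2^n := by
    intro n
    have ha : 0 < g (u n) := by
      rcases (hgnn (u n)).lt_or_eq with h | h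
      · exact h
      · exfalso
        have := hgun n
        rw [← h, zero_pow (by positivity)] at this
        exact hgt₀pos.ne this
    have hlog : Real.log (g (u n)) = Real.log (g t₀) / 2^n := by
      have := congrArg Real.log (hgun n)
      rw [Real.log_pow] at this
      have h2 : ((2:ℝ)^n : ℝ) ≠ 0 := by positivity
      push_cast at this
      field_simp
      linarith [this]
    have hle1 : Real.log (g (u n)) ≤ g (u n) - 1 := Real.log_le_sub_one_of_pos ha
    rw [hHg]
    have : 1 - g (u n) ≤ -Real.log (g (u n)) := by linarith
    rw [hlog] at this
    calc 1 - g (u n) ≤ -(Real.log (g t₀) / 2^n) := this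
      _ = K / 2^n := by rw [hK]; ring
  -- main estimate: for every m, ρ ({0}ᶜ ∩ {x | |x| ≤ m+1}) = 0
  have hzero : ∀ m : ℕ, ρ ({(0:ℝ)}ᶜ ∩ Set.Icc (-((m:ℝ)+1)) ((m:ℝ)+1)) = 0 := by
    intro m
    set R : ℝ := (m:ℝ) + 1 with hR
    have hRpos : 0 < R := by positivity
    set S : Set ℝ := Set.Icc (-R) R with hS
    have hSm : MeasurableSet S := measurableSet_Icc
    set J : ℝ≥0∞ := ∫⁻ x in S, ENNReal.ofReal (x^2) ∂ρ with hJ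
    -- J ≤ ofReal (C * q^n) eventually
    set C : ℝ := K * Real.pi^2 / (2 * t₀^2) with hC
    set q : ℝ := c^2 / 2 with hq
    have hq0 : 0 ≤ q := by positivity
    have hq1 : q < 1 := by rw [hq]; linarith
    have hbound : ∀ᶠ n in atTop, J ≤ ENNReal.ofReal (C * q^n) := by
      have hsmall : ∀ᶠ n in atTop, |u n| * R ≤ Real.pi := by
        have : Tendsto (fun n => |u n| * R) atTop (𝓝 0) := by
          have h1 : Tendsto (fun n => |u n|) atTop (𝓝 0) := by
            have := hu0.abs; simpa using this
          simpa using h1.mul_const R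
        filter_upwards [this.eventually (gt_mem_nhds Real.pi_pos)] with n h
        exact h.le
      filter_upwards [hsmall] with n hn
      have hune : u n ≠ 0 := by
        intro h
        exact ht₀ne (by rw [← hun n, h, mul_zero])
      set a : ℝ := 2/Real.pi^2 * (u n)^2 with ha
      have hapos : 0 < a := by
        rw [ha]
        have := Real.pi_pos
        positivity
      -- pointwise bound on S
      have hpt : ∀ x ∈ S, a * x^2 ≤ 1 - Real.cos (u n * x) := by
        intro x hx
        have hxR : |x| ≤ R := by
          rw [abs_le]; exact ⟨hx.1, hx.2⟩
        have habs : |u n * x| ≤ Real.pi := by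
          rw [abs_mul]
          calc |u n| * |x| ≤ |u n| * R := by
                exact mul_le_mul_of_nonneg_left hxR (abs_nonneg _)
            _ ≤ Real.pi := hn
        have := one_sub_cos_ge habs
        calc a * x^2 = 2/Real.pi^2 * (u n * x)^2 := by rw [ha]; ring
          _ ≤ 1 - Real.cos (u n * x) := this
      -- lintegral chain
      have hchain : ENNReal.ofReal a * J ≤ ENNReal.ofReal (K / 2^n) := by
        calc ENNReal.ofReal a * J
            = ∫⁻ x in S, ENNReal.ofReal a * ENNReal.ofReal (x^2) ∂ρ := by
              rw [hJ, lintegral_const_mul' _ _ ENNReal.ofReal_ne_top]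
          _ = ∫⁻ x in S, ENNReal.ofReal (a * x^2) ∂ρ := by
              congr 1; ext x
              rw [ENNReal.ofReal_mul hapos.le]
          _ ≤ ∫⁻ x in S, ENNReal.ofReal (1 - Real.cos (u n * x)) ∂ρ := by
              refine setLIntegral_mono' hSm ?_
              intro x hx
              exact ENNReal.ofReal_le_ofReal (hpt x hx)
          _ ≤ ∫⁻ x, ENNReal.ofReal (1 - Real.cos (u n * x)) ∂ρ :=
              setLIntegral_le_lintegral _ _
          _ = ENNReal.ofReal (H (u n)) := by
              rw [hH]
              exact (ofReal_integral_eq_lintegral_ofReal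
                ((integrable_const 1).sub (cos_integrable ρ (u n)))
                (ae_of_all _ fun x => by simp [Real.cos_le_one (u n * x)])).symm
          _ ≤ ENNReal.ofReal (K / 2^n) := ENNReal.ofReal_le_ofReal (hHb n)
      -- divide
      have hJle : J ≤ ENNReal.ofReal (K / 2^n) / ENNReal.ofReal a := by
        rw [ENNReal.le_div_iff_mul_le
          (Or.inl (by simpa [ENNReal.ofReal_eq_zero] using hapos.not_ge))
          (Or.inl ENNReal.ofReal_ne_top)]
        rw [mul_comm]
        exact hchain
      rw [← ENNReal.ofReal_div_of_pos hapos] at hJle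
      have harith : K / 2^n / a = C * q^n := by
        rw [ha, hC, hq, hu]
        have hπ : Real.pi ≠ 0 := Real.pi_pos.ne'
        field_simp
        ring
        have h2n : (1/2:ℝ)^n * 2^n = 1 := by rw [← mul_pow]; norm_num
        rw [mul_assoc _ ((1/2:ℝ)^n), h2n, mul_one]
      rw [harith] at hJle
      exact hJle
    have hJ0 : J = 0 := by
      have htend : Tendsto (fun n => ENNReal.ofReal (C * q^n)) atTop (𝓝 0) := by
        have h1 : Tendsto (fun n => C * q^n) atTop (𝓝 0) := by
          simpa using (tendsto_pow_atTop_nhds_zero_of_lt_one hq0 hq1).const_mul C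
        have := (ENNReal.tendsto_ofReal h1)
        simpa using this
      have := ge_of_tendsto htend hbound
      simpa using this
    -- conclude
    have hmeas : Measurable (fun x : ℝ => ENNReal.ofReal (x^2)) :=
      Measurable.ennreal_ofReal ((continuous_pow 2).measurable)
    have hae : (fun x : ℝ => ENNReal.ofReal (x^2)) =ᵐ[ρ.restrict S] 0 :=
      (lintegral_eq_zero_iff hmeas).mp hJ0
    have h2 : (ρ.restrict S) {x : ℝ | ¬ ENNReal.ofReal (x^2) = (0 : ℝ≥0∞)} = 0 := by
      have := hae
      rw [Filter.EventuallyEq, ae_iff] at this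
      simpa using this
    have h3 : {x : ℝ | ¬ ENNReal.ofReal (x^2) = (0 : ℝ≥0∞)} = {(0:ℝ)}ᶜ := by
      ext x
      simp only [Set.mem_setOf_eq, ENNReal.ofReal_eq_zero, not_le, Set.mem_compl_iff,
        Set.mem_singleton_iff]
      constructor
      · intro h hx
        rw [hx] at h
        simpa using h
      · intro h
        positivity
    rw [h3, Measure.restrict_apply (measurableSet_singleton (0:ℝ)).compl] at h2
    exact h2
  -- union over m
  have hcover : {(0:ℝ)}ᶜ ⊆ ⋃ m : ℕ, ({(0:ℝ)}ᶜ ∩ Set.Icc (-((m:ℝ)+1)) ((m:ℝ)+1)) := by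
    intro x hx
    refine Set.mem_iUnion.mpr ⟨⌈|x|⌉₊, hx, ?_⟩
    have h1 : |x| ≤ ⌈|x|⌉₊ := Nat.le_ceil _
    have h2 : |x| ≤ (⌈|x|⌉₊ : ℝ) + 1 := by linarith
    rw [Set.mem_Icc]
    constructor
    · linarith [abs_le.mp h2]
    · linarith [abs_le.mp h2]
  have : ρ {(0:ℝ)}ᶜ = 0 :=
    le_antisymm ((measure_mono hcover).trans (measure_iUnion_null hzero).le) zero_le
  exact hfull this
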